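/- Let n, m ∈ ℕ and let C₁, …, C_m ⊆ {1, …, n} be a family of clauses over variables x₁, …, x_n. Construct the finite simple graph G with vertex set {R₁, R₂, B₁} ∪ {u_i : i ∈ [m]} ∪ {v_j : j ∈ [n]} ∪ {w_{i,j} : i ∈ [m], j ∈ C_i} and edge set consisting of: the edge {R₁, B₁}; the edges {u_i, R₁} for all i ∈ [m]; the edges {v_j, R₂} for all j ∈ [n]; and the edges {w_{i,j}, u_i} and {w_{i,j}, v_j} for all i ∈ [m], j ∈ C_i. Define the partial coloring c by c(R₁) = c(R₂) = red, c(u_i) = red for all i, c(B₁) = blue, and c(v_j) = blue for all j. Then c can be extended to a 2-CNCF-coloring of G (using colors {red, blue}) if and only if there exists an assignment τ : [n] → {0,1} such that every clause C_i contains exactly one index j with τ(j) = 1. -/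
import Mathlib


inductive Color where
  | red
  | blue
deriving DecidableEq

/-- A coloring `c` of the vertices of `G` is a closed-neighborhood conflict-free
coloring if every closed neighborhood `N[v] = {v} ∪ N(v)` contains a vertex whose
color is unique in `N[v]`. -/
def IsCNCF {V C : Type*} (G : SimpleGraph V) (c : V → C) : Prop :=
  ∀ v : V, ∃ u ∈ insert v (G.neighborSet v),
    ∀ w ∈ insert v (G.neighborSet v), w ≠ u → c w ≠ c u

/-- Vertex set of the reduction graph: `Sum.inl 0 = R₁`, `Sum.inl 1 = R₂`,
`Sum.inl 2 = B₁`; `Sum.inr (Sum.inl i) = u_i`; `Sum.inr (Sum.inr (Sum.inl j)) = v_j`;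
`Sum.inr (Sum.inr (Sum.inr ⟨(i,j), _⟩)) = w_{i,j}` for `j ∈ C i`. -/
abbrev SatV (n m : ℕ) (C : Fin m → Finset (Fin n)) : Type :=
  Fin 3 ⊕ Fin m ⊕ Fin n ⊕ {p : Fin m × Fin n // p.2 ∈ C p.1}

/-- The (one-directional) edge relation of the reduction graph: `R₁B₁`, `R₁u_i`,
`R₂v_j`, `w_{i,j}u_i` and `w_{i,j}v_j` for `j ∈ C i`. -/
def satRel (n m : ℕ) (C : Fin m → Finset (Fin n)) :
    SatV n m C → SatV n m C → Prop
  | Sum.inl a, Sum.inl b => a = 0 ∧ b = 2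
  | Sum.inl a, Sum.inr (Sum.inl _) => a = 0
  | Sum.inl a, Sum.inr (Sum.inr (Sum.inl _)) => a = 1
  | Sum.inr (Sum.inr (Sum.inr p)), Sum.inr (Sum.inl i) => p.val.1 = i
  | Sum.inr (Sum.inr (Sum.inr p)), Sum.inr (Sum.inr (Sum.inl j)) => p.val.2 = j
  | _, _ => False

/-- The reduction graph from `Monotone Exact Sat`. -/
def satGraph (n m : ℕ) (C : Fin m → Finset (Fin n)) : SimpleGraph (SatV n m C) :=
  SimpleGraph.fromRel (satRel n m C)

section SatAux
variable {n m : ℕ} {C : Fin m → Finset (Fin n)}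

lemma mem_closed_iff (x y : SatV n m C) :
    y ∈ insert x ((satGraph n m C).neighborSet x) ↔
      y = x ∨ (x ≠ y ∧ (satRel n m C x y ∨ satRel n m C y x)) := by
  simp [satGraph, SimpleGraph.fromRel_adj]

lemma color_cases (x : Color) : x = Color.red ∨ x = Color.blue := by
  cases x <;> simp

def extColor (n m : ℕ) (C : Fin m → Finset (Fin n)) (τ : Fin n → Bool) : SatV n m C → Color
  | Sum.inl a => if a = 2 then Color.blue else Color.red
  | Sum.inr (Sum.inl _) => Color.red
  | Sum.inr (Sum.inr (Sum.inl _)) => Color.blue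
  | Sum.inr (Sum.inr (Sum.inr p)) => if τ p.val.2 then Color.blue else Color.red

lemma extColor_isCNCF (τ : Fin n → Bool)
    (hτ : ∀ i : Fin m, ∃! j : Fin n, j ∈ C i ∧ τ j = true) :
    IsCNCF (satGraph n m C) (extColor n m C τ) := by
  intro x
  rcases x with a | i | j | p
  · fin_cases a
    · -- R₁ : witness B₁
      refine ⟨Sum.inl 2, by rw [mem_closed_iff]; exact Or.inr ⟨by simp, Or.inl ⟨rfl, rfl⟩⟩, ?_⟩
      intro w hw hne
      rcases w with a' | i' | j' | p'
      · rw [mem_closed_iff] at hw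
        simp [satRel] at hw
        rcases hw with h | ⟨-, h⟩
        · subst h; simp [extColor]
        · exact absurd (by rw [h]) hne
      · simp [extColor]
      · rw [mem_closed_iff] at hw; simp [satRel] at hw
      · rw [mem_closed_iff] at hw; simp [satRel] at hw
    · -- R₂ : witness itself
      refine ⟨Sum.inl 1, by simp [mem_closed_iff], ?_⟩
      intro w hw hne
      rcases w with a' | i' | j' | p'
      · rw [mem_closed_iff] at hw
        simp [satRel] at hw
        subst hw; exact absurd rfl hne
      · rw [mem_closed_iff] at hw; simp [satRel] at hw
      · simp [extColor]
      · rw [mem_closed_iff] at hw; simp [satRel] at hw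
    · -- B₁ : witness itself
      refine ⟨Sum.inl 2, by simp [mem_closed_iff], ?_⟩
      intro w hw hne
      rcases w with a' | i' | j' | p'
      · rw [mem_closed_iff] at hw
        simp [satRel] at hw
        rcases hw with h | ⟨-, h⟩
        · exact absurd (by rw [h]) hne
        · subst h; simp [extColor]
      · rw [mem_closed_iff] at hw; simp [satRel] at hw
      · rw [mem_closed_iff] at hw; simp [satRel] at hw
      · rw [mem_closed_iff] at hw; simp [satRel] at hw
  · -- u_i : witness w_{i,j₀} where j₀ unique true
    obtain ⟨j₀, ⟨hj₀C, hj₀τ⟩, huniq⟩ := hτ i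
    refine ⟨Sum.inr (Sum.inr (Sum.inr ⟨(i, j₀), hj₀C⟩)),
      by rw [mem_closed_iff]; exact Or.inr ⟨by simp, Or.inr rfl⟩, ?_⟩
    intro w hw hne
    rcases w with a' | i' | j' | p'
    · rw [mem_closed_iff] at hw
      simp [satRel] at hw
      subst hw; simp [extColor, hj₀τ]
    · rw [mem_closed_iff] at hw
      simp [satRel] at hw
      subst hw; simp [extColor, hj₀τ]
    · rw [mem_closed_iff] at hw; simp [satRel] at hw
    · rw [mem_closed_iff] at hw
      simp [satRel] at hw
      -- hw : p'.val.1 = i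
      have hj' : p'.val.2 ≠ j₀ := by
        intro h
        apply hne
        simp only [Sum.inr.injEq]
        exact Subtype.ext (Prod.ext hw h)
      have hτ' : τ p'.val.2 ≠ true := by
        intro h
        exact hj' (huniq p'.val.2 ⟨by rw [← hw]; exact p'.property, h⟩)
      simp [extColor, hj₀τ, hτ']
  · -- v_j : depends on τ j
    by_cases hτj : τ j = true
    · -- all w blue; witness R₂ (red)
      refine ⟨Sum.inl 1, by rw [mem_closed_iff]; exact Or.inr ⟨by simp, Or.inr rfl⟩, ?_⟩
      intro w hw hne
      rcases w with a' | i' | j' | p'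
      · rw [mem_closed_iff] at hw
        simp [satRel] at hw
        exact absurd (by rw [hw]) hne
      · rw [mem_closed_iff] at hw; simp [satRel] at hw
      · rw [mem_closed_iff] at hw
        simp [satRel] at hw
        subst hw; simp [extColor]
      · rw [mem_closed_iff] at hw
        simp [satRel] at hw
        simp [extColor, hw, hτj]
    · -- all w red; witness v_j (blue)
      refine ⟨Sum.inr (Sum.inr (Sum.inl j)), by simp [mem_closed_iff], ?_⟩
      intro w hw hne
      rcases w with a' | i' | j' | p'
      · rw [mem_closed_iff] at hw
        simp [satRel] at hw
        subst hw; simp [extColor]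
      · rw [mem_closed_iff] at hw; simp [satRel] at hw
      · rw [mem_closed_iff] at hw
        simp [satRel] at hw
        exact absurd (by rw [hw]) hne
      · rw [mem_closed_iff] at hw
        simp [satRel] at hw
        simp [extColor, hw, hτj]
  · -- w_{i,j}
    by_cases hc : τ p.val.2 = true
    · -- w is blue; witness u_i (red)
      refine ⟨Sum.inr (Sum.inl p.val.1),
        by rw [mem_closed_iff]; exact Or.inr ⟨by simp, Or.inl rfl⟩, ?_⟩
      intro w hw hne
      rcases w with a' | i' | j' | p'
      · rw [mem_closed_iff] at hw; simp [satRel] at hw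
      · rw [mem_closed_iff] at hw
        simp [satRel] at hw
        exact absurd (by simp [hw]) hne
      · rw [mem_closed_iff] at hw
        simp [satRel] at hw
        simp [extColor]
      · rw [mem_closed_iff] at hw
        simp [satRel] at hw
        subst hw; simp [extColor, hc]
    · -- w is red; witness v_j (blue)
      refine ⟨Sum.inr (Sum.inr (Sum.inl p.val.2)),
        by rw [mem_closed_iff]; exact Or.inr ⟨by simp, Or.inl rfl⟩, ?_⟩
      intro w hw hne
      rcases w with a' | i' | j' | p'
      · rw [mem_closed_iff] at hw; simp [satRel] at hw
      · rw [mem_closed_iff] at hw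
        simp [satRel] at hw
        simp [extColor]
      · rw [mem_closed_iff] at hw
        simp [satRel] at hw
        exact absurd (by simp [hw]) hne
      · rw [mem_closed_iff] at hw
        simp [satRel] at hw
        subst hw; simp [extColor, hc]

lemma forward_dir (c : SatV n m C → Color)
    (h0 : c (Sum.inl 0) = Color.red) (h1 : c (Sum.inl 1) = Color.red)
    (hu : ∀ i : Fin m, c (Sum.inr (Sum.inl i)) = Color.red)
    (hv : ∀ j : Fin n, c (Sum.inr (Sum.inr (Sum.inl j))) = Color.blue)
    (hc : IsCNCF (satGraph n m C) c) :
    ∃ τ : Fin n → Bool, ∀ i : Fin m, ∃! j : Fin n, j ∈ C i ∧ τ j = true := by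
  classical
  -- column consistency from the CNCF condition at v_j
  have hcons : ∀ (j : Fin n) (i i' : Fin m) (hi : j ∈ C i) (hi' : j ∈ C i'),
      c (Sum.inr (Sum.inr (Sum.inr ⟨(i, j), hi⟩))) =
      c (Sum.inr (Sum.inr (Sum.inr ⟨(i', j), hi'⟩))) := by
    intro j i i' hi hi'
    obtain ⟨u, humem, huniq⟩ := hc (Sum.inr (Sum.inr (Sum.inl j)))
    have hWmem : ∀ (i₀ : Fin m) (h₀ : j ∈ C i₀),
        (Sum.inr (Sum.inr (Sum.inr ⟨(i₀, j), h₀⟩)) : SatV n m C) ∈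
          insert (Sum.inr (Sum.inr (Sum.inl j)))
            ((satGraph n m C).neighborSet (Sum.inr (Sum.inr (Sum.inl j)))) := by
      intro i₀ h₀
      rw [mem_closed_iff]
      exact Or.inr ⟨by simp, Or.inr rfl⟩
    rcases u with a | i₀ | j₀ | p₀
    · rw [mem_closed_iff] at humem
      simp [satRel] at humem
      subst humem
      -- u = R₂, red: all w's avoid red
      have hb : ∀ (i₀ : Fin m) (h₀ : j ∈ C i₀),
          c (Sum.inr (Sum.inr (Sum.inr ⟨(i₀, j), h₀⟩))) = Color.blue := by
        intro i₀ h₀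
        have := huniq _ (hWmem i₀ h₀) (by simp)
        rw [h1] at this
        rcases color_cases (c (Sum.inr (Sum.inr (Sum.inr ⟨(i₀, j), h₀⟩)))) with h | h
        · exact absurd h this
        · exact h
      rw [hb i hi, hb i' hi']
    · rw [mem_closed_iff] at humem; simp [satRel] at humem
    · rw [mem_closed_iff] at humem
      simp [satRel] at humem
      subst humem
      -- u = v_j, blue: all w's avoid blue
      have hb : ∀ (k : Fin m) (hk : j₀ ∈ C k),
          c (Sum.inr (Sum.inr (Sum.inr ⟨(k, j₀), hk⟩))) = Color.red := by
        intro k hk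
        have := huniq _ (hWmem k hk) (by simp)
        rw [hv j₀] at this
        rcases color_cases (c (Sum.inr (Sum.inr (Sum.inr ⟨(k, j₀), hk⟩)))) with h | h
        · exact h
        · exact absurd h this
      rw [hb i hi, hb i' hi']
    · -- u = some w: contradiction with v_j and R₂
      have hvj := huniq (Sum.inr (Sum.inr (Sum.inl j))) (by simp [mem_closed_iff]) (by simp)
      have hR2 := huniq (Sum.inl 1)
        (by rw [mem_closed_iff]; exact Or.inr ⟨by simp, Or.inr rfl⟩) (by simp)
      rw [hv j] at hvj
      rw [h1] at hR2
      rcases color_cases (c (Sum.inr (Sum.inr (Sum.inr p₀)))) with h | h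
      · exact absurd h.symm hR2
      · exact absurd h.symm hvj
  -- the assignment
  refine ⟨fun j => decide (∃ i, ∃ h : j ∈ C i,
      c (Sum.inr (Sum.inr (Sum.inr ⟨(i, j), h⟩))) = Color.blue), ?_⟩
  intro i
  obtain ⟨u, humem, huniq⟩ := hc (Sum.inr (Sum.inl i))
  have hR1mem : (Sum.inl 0 : SatV n m C) ∈ insert (Sum.inr (Sum.inl i))
      ((satGraph n m C).neighborSet (Sum.inr (Sum.inl i))) := by
    rw [mem_closed_iff]; exact Or.inr ⟨by simp, Or.inr rfl⟩
  have hWmem : ∀ (j₀ : Fin n) (h₀ : j₀ ∈ C i),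
      (Sum.inr (Sum.inr (Sum.inr ⟨(i, j₀), h₀⟩)) : SatV n m C) ∈
        insert (Sum.inr (Sum.inl i)) ((satGraph n m C).neighborSet (Sum.inr (Sum.inl i))) := by
    intro j₀ h₀
    rw [mem_closed_iff]
    exact Or.inr ⟨by simp, Or.inr rfl⟩
  rcases u with a | i₀ | j₀ | p₀
  · rw [mem_closed_iff] at humem
    simp [satRel] at humem
    subst humem
    have := huniq (Sum.inr (Sum.inl i)) (by simp [mem_closed_iff]) (by simp)
    rw [hu i, h0] at this
    exact absurd rfl this
  · rw [mem_closed_iff] at humem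
    simp [satRel] at humem
    subst humem
    have := huniq (Sum.inl 0) hR1mem (by simp)
    rw [hu i₀, h0] at this
    exact absurd rfl this
  · rw [mem_closed_iff] at humem; simp [satRel] at humem
  · rw [mem_closed_iff] at humem
    simp [satRel] at humem
    -- humem : p₀.val.1 = i
    rcases color_cases (c (Sum.inr (Sum.inr (Sum.inr p₀)))) with h | h
    · have := huniq (Sum.inl 0) hR1mem (by simp)
      rw [h0, h] at this
      exact absurd rfl this
    · refine ⟨p₀.val.2, ⟨by rw [← humem]; exact p₀.property, ?_⟩, ?_⟩
      · rw [decide_eq_true_iff]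
        exact ⟨p₀.val.1, p₀.property, h⟩
      · intro j' hj'
        obtain ⟨hj'C, hj'τ⟩ := hj'
        rw [decide_eq_true_iff] at hj'τ
        obtain ⟨i₀, h₀, hblue⟩ := hj'τ
        have hkey : c (Sum.inr (Sum.inr (Sum.inr ⟨(i, j'), hj'C⟩))) = Color.blue := by
          rw [hcons j' i i₀ hj'C h₀]; exact hblue
        by_contra hne
        have hne' : (Sum.inr (Sum.inr (Sum.inr ⟨(i, j'), hj'C⟩)) : SatV n m C) ≠
            Sum.inr (Sum.inr (Sum.inr p₀)) := by
          intro heq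
          simp only [Sum.inr.injEq] at heq
          apply hne
          have := congrArg (fun q : {p : Fin m × Fin n // p.2 ∈ C p.1} => q.val.2) heq
          exact this
        have := huniq _ (hWmem j' hj'C) hne'
        rw [hkey, h] at this
        exact absurd rfl this

end SatAux

/-- The precoloring `R₁, R₂, u_i ↦ red`, `B₁, v_j ↦ blue` extends to a
2-CNCF-coloring of the reduction graph iff there is an assignment `τ` such that
every clause `C i` contains exactly one index `j` with `τ j = true`. -/
theorem two_CNCF_extension_iff_exact_sat (n m : ℕ) (C : Fin m → Finset (Fin n)) :
    (∃ c : SatV n m C → Color,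
      c (Sum.inl 0) = Color.red ∧
      c (Sum.inl 1) = Color.red ∧
      c (Sum.inl 2) = Color.blue ∧
      (∀ i : Fin m, c (Sum.inr (Sum.inl i)) = Color.red) ∧
      (∀ j : Fin n, c (Sum.inr (Sum.inr (Sum.inl j))) = Color.blue) ∧
      IsCNCF (satGraph n m C) c) ↔
    (∃ τ : Fin n → Bool, ∀ i : Fin m, ∃! j : Fin n, j ∈ C i ∧ τ j = true) := by
  constructor
  · rintro ⟨c, h0, h1, _h2, hu, hv, hc⟩
    exact forward_dir c h0 h1 hu hv hc
  · rintro ⟨τ, hτ⟩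
    exact ⟨extColor n m C τ, rfl, rfl, rfl, fun _ => rfl, fun _ => rfl, extColor_isCNCF τ hτ⟩
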